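/- Suppose |r(λ_n)| > 0 and X_n* B Y_0 is invertible, and define the (N−n)×n matrix W = (X_n'* B Y_0)(X_n* B Y_0)^{-1} with columns w_1,…,w_n. Then the constant α_j in the subspace-iteration error bound may be taken as α_j = ‖w_j‖_2: for all k ≥ 1 and each 1 ≤ j ≤ n, there exists a vector e_j with ‖e_j‖_B ≤ ‖w_j‖_2 · |r(λ_{n+1})/r(λ_j)|^k such that x_j + e_j lies in the column span of Z_k. -/

import Mathlib

open Matrix ComplexOrder


private lemma feast_aux_lt {N n : ℕ} (hnN : n < N) (m : Fin (N - n)) : n + (m : ℕ) < N := by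
  omega

private lemma feast_aux_sum_split (N n : ℕ) (hnN : n < N) (F : Fin N → ℝ) :
    ∑ i, F i = (∑ i : Fin n, F (Fin.castLE hnN.le i)) +
      ∑ m : Fin (N - n), F (⟨n + (m : ℕ), feast_aux_lt hnN m⟩ : Fin N) := by
  rw [← Fintype.sum_equiv ((finSumFinEquiv (m := n) (n := N - n)).trans
    (finCongr (by omega))) (fun s => F _) F (fun s => rfl), Fintype.sum_sum_type]
  refine congrArg₂ (· + ·) (Finset.sum_congr rfl fun i _ => congrArg F (Fin.ext ?_))
    (Finset.sum_congr rfl fun m _ => congrArg F (Fin.ext ?_)) <;>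
    simp [finSumFinEquiv]

/-- **Explicit constant in the FEAST convergence bound** (Güttel–Polizzi–Tang–Viaud,
proof of Theorem 2.2).  With `W = (X_n'ᴴ B Y_0)(X_nᴴ B Y_0)⁻¹` (columns `w_1,…,w_n`),
the constant `α_j` may be taken as `‖w_j‖_2`: for all `k ≥ 1` and each `j ≤ n` there
is a vector `e_j` with `‖e_j‖_B ≤ ‖w_j‖_2 · |r(λ_{n+1})/r(λ_j)|^k` such that
`x_j + e_j` lies in the column span of `Z_k`. -/
theorem feast_subspace_iteration_explicit_constant
    (N n : ℕ) (hn1 : 1 ≤ n) (hnN : n < N)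
    (A B X : Matrix (Fin N) (Fin N) ℂ)
    (hB : B.PosDef)
    (lam : Fin N → ℝ)
    (hX : Xᴴ * B * X = 1)
    (hM : B⁻¹ * A = X * Matrix.diagonal (fun i => (lam i : ℂ)) * X⁻¹)
    (r : ℝ → ℂ)
    (hord : ∀ i j : Fin N, i ≤ j → ‖r (lam j)‖ ≤ ‖r (lam i)‖)
    (rM : Matrix (Fin N) (Fin N) ℂ)
    (hrM : rM = X * Matrix.diagonal (fun i => r (lam i)) * X⁻¹)
    (Y Z : ℕ → Matrix (Fin N) (Fin n) ℂ)
    (W : ℕ → Matrix (Fin n) (Fin n) ℂ)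
    (hZ : ∀ k, Z (k + 1) = rM * Y k)
    (hW : ∀ k, (W (k + 1))ᴴ * ((Z (k + 1))ᴴ * B * Z (k + 1)) * W (k + 1) = 1)
    (hY : ∀ k, Y (k + 1) = Z (k + 1) * W (k + 1))
    (Xn : Matrix (Fin N) (Fin n) ℂ)
    (hXn : Xn = X.submatrix id (Fin.castLE hnN.le))
    (Xn' : Matrix (Fin N) (Fin (N - n)) ℂ)
    (hXn' : Xn' = X.submatrix id (fun j : Fin (N - n) => (⟨n + (j : ℕ), by omega⟩ : Fin N)))
    (hrn : 0 < ‖r (lam ⟨n - 1, by omega⟩)‖)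
    (hY0 : IsUnit (Xnᴴ * B * Y 0))
    (Bnorm : (Fin N → ℂ) → ℝ)
    (hBnorm : ∀ w, Bnorm w = Real.sqrt ((star w ⬝ᵥ B.mulVec w).re))
    (Wm : Matrix (Fin (N - n)) (Fin n) ℂ)
    (hWm : Wm = (Xn'ᴴ * B * Y 0) * (Xnᴴ * B * Y 0)⁻¹) :
    ∀ k, 1 ≤ k → ∀ j : Fin n,
      ∃ e : Fin N → ℂ,
        Bnorm e ≤ Real.sqrt (∑ i, ‖Wm i j‖ ^ 2) *
          (‖r (lam ⟨n, hnN⟩)‖ /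
            ‖r (lam (Fin.castLE hnN.le j))‖) ^ k ∧
        ((fun i => X i (Fin.castLE hnN.le j)) + e) ∈
          LinearMap.range (Z k).mulVecLin := by
  -- basic facts about X
  have hXinv : X⁻¹ = Xᴴ * B := Matrix.inv_eq_left_inv hX
  have hX1 : X⁻¹ * X = 1 := by rw [hXinv]; exact hX
  set D : Matrix (Fin N) (Fin N) ℂ := Matrix.diagonal (fun i => r (lam i)) with hD
  -- invertibility of the W's
  have hWu : ∀ k, IsUnit (W (k + 1)) := fun k =>
    (Matrix.isUnit_iff_isUnit_det _).mpr (Matrix.isUnit_det_of_left_inverse (hW k))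
  -- structure of Z k
  have key : ∀ k, 1 ≤ k → ∃ C : Matrix (Fin n) (Fin n) ℂ,
      IsUnit C ∧ Z k = X * D ^ k * (X⁻¹ * Y 0) * C := by
    intro k hk
    induction k, hk using Nat.le_induction with
    | base =>
      exact ⟨1, isUnit_one, by rw [hZ 0, hrM, pow_one, Matrix.mul_one, Matrix.mul_assoc]⟩
    | succ k hk ih =>
      obtain ⟨C, hCu, hC⟩ := ih
      refine ⟨C * W k, hCu.mul ?_, ?_⟩
      · obtain ⟨m, rfl⟩ := Nat.exists_eq_add_of_le hk
        rw [Nat.add_comm 1 m]; exact hWu m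
      · obtain ⟨m, rfl⟩ := Nat.exists_eq_add_of_le hk
        have hYk : Y (1 + m) = Z (1 + m) * W (1 + m) := by
          rw [Nat.add_comm 1 m]; exact hY m
        rw [hZ, hYk, hC, hrM, pow_succ]
        have hcomm : D * D ^ (1 + m) = D ^ (1 + m) * D := ((Commute.refl D).pow_right _)
        calc X * D * X⁻¹ * (X * D ^ (1 + m) * (X⁻¹ * Y 0) * C * W (1 + m))
            = X * (D * (X⁻¹ * X) * D ^ (1 + m)) * (X⁻¹ * Y 0) * (C * W (1 + m)) := by
              simp only [Matrix.mul_assoc]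
          _ = X * (D ^ (1 + m) * D) * (X⁻¹ * Y 0) * (C * W (1 + m)) := by
              rw [hX1, Matrix.mul_one, hcomm]
  intro k hk j
  set j' : Fin N := Fin.castLE hnN.le j with hj'
  -- r (lam j') ≠ 0
  have hjle : j' ≤ (⟨n - 1, by omega⟩ : Fin N) := by
    simp only [Fin.le_def]; have := j.isLt; simp [hj']; omega
  have hrjpos : 0 < ‖r (lam j')‖ := lt_of_lt_of_le hrn (hord _ _ hjle)
  have hrj : r (lam j') ≠ 0 := by
    intro h; rw [h] at hrjpos; simp at hrjpos
  set U : Matrix (Fin n) (Fin n) ℂ := Xnᴴ * B * Y 0 with hU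
  have hUdet : IsUnit U.det := (Matrix.isUnit_iff_isUnit_det U).mp hY0
  have hUU : U * U⁻¹ = 1 := Matrix.mul_nonsing_inv U hUdet
  set c : Fin N → ℂ := fun i => ((Xᴴ * B * Y 0) * U⁻¹) i j with hc
  -- block rows of Xᴴ B Y 0
  have hblock1 : (Xᴴ * B * Y 0).submatrix (Fin.castLE hnN.le) id = U := by
    rw [hU, hXn]
    ext i m
    simp [Matrix.mul_apply, Matrix.conjTranspose_apply, Matrix.submatrix_apply]
  have hblock2 : (Xᴴ * B * Y 0).submatrix
      (fun m : Fin (N - n) => (⟨n + (m : ℕ), feast_aux_lt hnN m⟩ : Fin N)) id = Xn'ᴴ * B * Y 0 := by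
    rw [hXn']
    ext i m
    simp [Matrix.mul_apply, Matrix.conjTranspose_apply, Matrix.submatrix_apply]
  have hsub1 : ∀ (i : Fin n) (m : Fin n),
      ((Xᴴ * B * Y 0) * U⁻¹) (Fin.castLE hnN.le i) m = (U * U⁻¹) i m := by
    intro i m
    have hs := Matrix.submatrix_mul (Xᴴ * B * Y 0) U⁻¹ (Fin.castLE hnN.le)
      (id : Fin n → Fin n) (id : Fin n → Fin n) Function.bijective_id
    rw [Matrix.submatrix_id_id, hblock1] at hs
    calc ((Xᴴ * B * Y 0) * U⁻¹) (Fin.castLE hnN.le i) m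
        = ((Xᴴ * B * Y 0) * U⁻¹).submatrix (Fin.castLE hnN.le) id i m := rfl
      _ = (U * U⁻¹) i m := by rw [hs]
  have hsub2 : ∀ (i : Fin (N - n)) (m : Fin n),
      ((Xᴴ * B * Y 0) * U⁻¹) (⟨n + (i : ℕ), feast_aux_lt hnN i⟩ : Fin N) m
        = ((Xn'ᴴ * B * Y 0) * U⁻¹) i m := by
    intro i m
    have hs := Matrix.submatrix_mul (Xᴴ * B * Y 0) U⁻¹
      (fun m : Fin (N - n) => (⟨n + (m : ℕ), feast_aux_lt hnN m⟩ : Fin N))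
      (id : Fin n → Fin n) (id : Fin n → Fin n) Function.bijective_id
    rw [Matrix.submatrix_id_id, hblock2] at hs
    calc ((Xᴴ * B * Y 0) * U⁻¹) (⟨n + (i : ℕ), feast_aux_lt hnN i⟩ : Fin N) m
        = ((Xᴴ * B * Y 0) * U⁻¹).submatrix
            (fun m : Fin (N - n) => (⟨n + (m : ℕ), feast_aux_lt hnN m⟩ : Fin N)) id i m := rfl
      _ = ((Xn'ᴴ * B * Y 0) * U⁻¹) i m := by rw [hs]
  have hc1 : ∀ i : Fin n, c (Fin.castLE hnN.le i) = if i = j then 1 else 0 := by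
    intro i
    have h1 : c (Fin.castLE hnN.le i) = (U * U⁻¹) i j := hsub1 i j
    rw [h1, hUU, Matrix.one_apply]
  have hc2 : ∀ m : Fin (N - n), c (⟨n + (m : ℕ), feast_aux_lt hnN m⟩ : Fin N) = Wm m j := by
    intro m
    have h1 : c (⟨n + (m : ℕ), feast_aux_lt hnN m⟩ : Fin N) = ((Xn'ᴴ * B * Y 0) * U⁻¹) m j := hsub2 m j
    rw [h1, ← hWm]
  -- the coefficient vector
  set g : Fin N → ℂ := fun i => (r (lam i)) ^ k * (((r (lam j')) ^ k)⁻¹ * c i) with hg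
  have hgj : g j' = 1 := by
    have : c j' = 1 := by rw [hj', hc1 j]; simp
    rw [hg]; simp only [this, mul_one]
    field_simp
  set h : Fin N → ℂ := g - Pi.single j' 1 with hh
  refine ⟨X.mulVec h, ?_, ?_⟩
  · -- norm bound
    have hsq : (star (X.mulVec h) ⬝ᵥ B.mulVec (X.mulVec h)) = star h ⬝ᵥ h := by
      rw [Matrix.mulVec_mulVec, Matrix.dotProduct_mulVec, Matrix.star_mulVec,
        Matrix.vecMul_vecMul, ← Matrix.mul_assoc, hX, Matrix.vecMul_one]
    have hre : (star h ⬝ᵥ h).re = ∑ i, ‖h i‖ ^ 2 := by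
      simp only [dotProduct, Pi.star_apply, RCLike.star_def]
      rw [Complex.re_sum]
      exact Finset.sum_congr rfl fun i _ => by
        rw [Complex.sq_norm, ← Complex.normSq_eq_conj_mul_self]; rfl
    -- values of h
    have hh1 : ∀ i : Fin n, h (Fin.castLE hnN.le i) = 0 := by
      intro i
      rw [hh]
      by_cases hij : i = j
      · subst hij
        simp only [Pi.sub_apply, ← hj', hgj]
        rw [Pi.single_eq_same]; ring
      · have hne : Fin.castLE hnN.le i ≠ j' := by
          rw [hj']; exact fun hcon => hij (Fin.castLE_injective _ hcon)
        simp only [Pi.sub_apply, Pi.single_eq_of_ne hne]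
        rw [hg]; simp only [hc1 i, if_neg hij]; ring
    have hh2 : ∀ m : Fin (N - n),
        h (⟨n + (m : ℕ), feast_aux_lt hnN m⟩ : Fin N) =
          (r (lam (⟨n + (m : ℕ), feast_aux_lt hnN m⟩ : Fin N))) ^ k *
            (((r (lam j')) ^ k)⁻¹ * Wm m j) := by
      intro m
      have hne : (⟨n + (m : ℕ), feast_aux_lt hnN m⟩ : Fin N) ≠ j' := by
        intro hcon
        have := congrArg Fin.val hcon
        simp only [hj', Fin.coe_castLE] at this
        have := j.isLt; omega
      rw [hh]
      simp only [Pi.sub_apply, Pi.single_eq_of_ne hne, sub_zero]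
      rw [hg]; simp only [hc2 m]
    -- split the sum
    have hsum : ∑ i, ‖h i‖ ^ 2 =
        ∑ m : Fin (N - n), ‖h (⟨n + (m : ℕ), feast_aux_lt hnN m⟩ : Fin N)‖ ^ 2 := by
      rw [feast_aux_sum_split N n hnN]
      simp [hh1]
    -- bound each term
    set ρ : ℝ := ‖r (lam ⟨n, hnN⟩)‖ / ‖r (lam j')‖ with hρ
    have hρ0 : 0 ≤ ρ := div_nonneg (norm_nonneg _) (norm_nonneg _)
    have hterm : ∀ m : Fin (N - n),
        ‖h (⟨n + (m : ℕ), feast_aux_lt hnN m⟩ : Fin N)‖ ^ 2 ≤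
          ‖Wm m j‖ ^ 2 * (ρ ^ k) ^ 2 := by
      intro m
      rw [hh2 m]
      have hle : ‖r (lam (⟨n + (m : ℕ), feast_aux_lt hnN m⟩ : Fin N))‖ ≤
          ‖r (lam ⟨n, hnN⟩)‖ := by
        apply hord
        simp [Fin.le_def]
      have habs : ‖(r (lam (⟨n + (m : ℕ), feast_aux_lt hnN m⟩ : Fin N))) ^ k *
          (((r (lam j')) ^ k)⁻¹ * Wm m j)‖ =
          ‖Wm m j‖ *
            (‖r (lam (⟨n + (m : ℕ), feast_aux_lt hnN m⟩ : Fin N))‖ /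
              ‖r (lam j')‖) ^ k := by
        rw [norm_mul, norm_mul, norm_inv, norm_pow, norm_pow, div_pow]
        ring
      rw [habs, mul_pow]
      have h1 : (0:ℝ) ≤ ‖r (lam (⟨n + (m : ℕ), feast_aux_lt hnN m⟩ : Fin N))‖ /
          ‖r (lam j')‖ := by positivity
      have hratio : ‖r (lam (⟨n + (m : ℕ), feast_aux_lt hnN m⟩ : Fin N))‖ /
          ‖r (lam j')‖ ≤ ρ := by
        rw [hρ]
        gcongr
      have h2 := pow_le_pow_left₀ h1 hratio k
      have h3 := pow_le_pow_left₀ (pow_nonneg h1 k) h2 2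
      exact mul_le_mul_of_nonneg_left h3 (sq_nonneg _)
    have hsum2 : ∑ i, ‖h i‖ ^ 2 ≤
        (∑ i, ‖Wm i j‖ ^ 2) * (ρ ^ k) ^ 2 := by
      rw [hsum, Finset.sum_mul]
      exact Finset.sum_le_sum fun m _ => hterm m
    rw [hBnorm, hsq, hre]
    calc Real.sqrt (∑ i, ‖h i‖ ^ 2)
        ≤ Real.sqrt ((∑ i, ‖Wm i j‖ ^ 2) * (ρ ^ k) ^ 2) :=
          Real.sqrt_le_sqrt hsum2
      _ = Real.sqrt (∑ i, ‖Wm i j‖ ^ 2) * (ρ ^ k) := by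
          rw [Real.sqrt_mul (Finset.sum_nonneg fun i _ => sq_nonneg _),
            Real.sqrt_sq (pow_nonneg hρ0 k)]
  · -- membership in the range of Z k
    obtain ⟨C, hCu, hC⟩ := key k hk
    have hCdet : IsUnit C.det := (Matrix.isUnit_iff_isUnit_det C).mp hCu
    have hCC : C * C⁻¹ = 1 := Matrix.mul_nonsing_inv C hCdet
    set v : Fin n → ℂ := ((r (lam j')) ^ k)⁻¹ • (U⁻¹.mulVec (Pi.single j 1)) with hv
    refine ⟨C⁻¹.mulVec v, ?_⟩
    have hfix : (fun i => X i j') + X.mulVec h = X.mulVec g := by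
      funext i
      have hXs : X.mulVec (Pi.single j' 1) = fun i => X i j' := by
        rw [Matrix.mulVec_single_one]; funext i; rfl
      simp only [hh, Pi.add_apply]
      rw [Matrix.mulVec_sub, hXs]
      simp
    have hin : (X⁻¹ * Y 0).mulVec v = ((r (lam j')) ^ k)⁻¹ • c := by
      rw [hv, Matrix.mulVec_smul, Matrix.mulVec_mulVec, Matrix.mulVec_single_one, hXinv]
      funext i
      simp only [Pi.smul_apply, smul_eq_mul, mul_one, hc, Matrix.col_apply]
    have hdg : (D ^ k).mulVec (((r (lam j')) ^ k)⁻¹ • c) = g := by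
      funext i
      rw [hD, Matrix.diagonal_pow, Matrix.mulVec_smul]
      simp only [Pi.smul_apply, smul_eq_mul, Matrix.mulVec_diagonal, Pi.pow_apply, hg]
      ring
    rw [Matrix.mulVecLin_apply, hfix, hC, Matrix.mulVec_mulVec,
      Matrix.mul_assoc (X * D ^ k * (X⁻¹ * Y 0)) C C⁻¹, hCC, Matrix.mul_one,
      ← Matrix.mulVec_mulVec, ← Matrix.mulVec_mulVec, hin, hdg]
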